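/- Let D be a nonnegative integer-valued integrable random variable, r > 0, h > 0, β ∈ [0,1), and define L(x) = E[(1-β)·r·min(x,D) - h·(x-D)⁺] for x ∈ ℕ. Then L(x+1) - L(x) = (1-β)·r·P[D ≥ x+1] - h·P[D ≤ x], and s* := min{x ∈ ℕ : P[D ≤ x] ≥ (1-β)r / ((1-β)r + h)} is a global maximizer of L over ℕ. -/

import Mathlib

open MeasureTheory

/-- Critical-quantile characterization of the optimal base-stock level for
the zero-lead-time partial backorder system: the first difference of
`L(x) = E[(1-β) r min(x,D) - h (x-D)⁺]` equals
`(1-β) r P[D ≥ x+1] - h P[D ≤ x]`, and the smallest `x` with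
`P[D ≤ x] ≥ (1-β)r/((1-β)r + h)` is a global maximizer of `L` over `ℕ`. -/
theorem optimal_base_stock_quantile {Ω : Type*} [MeasurableSpace Ω]
    (μ : Measure Ω) [IsProbabilityMeasure μ]
    (D : Ω → ℕ) (hD : Measurable D)
    (hDint : Integrable (fun ω => (D ω : ℝ)) μ)
    (r h β : ℝ) (hr : 0 < r) (hh : 0 < h) (hβ0 : 0 ≤ β) (hβ1 : β < 1)
    (L : ℕ → ℝ)
    (hL : ∀ x : ℕ, L x =
      ∫ ω, ((1 - β) * r * min (x : ℝ) (D ω) - h * max ((x : ℝ) - D ω) 0) ∂μ) :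
    (∀ x : ℕ, L (x + 1) - L x =
        (1 - β) * r * (μ {ω | x + 1 ≤ D ω}).toReal
          - h * (μ {ω | D ω ≤ x}).toReal) ∧
      (∀ x : ℕ, L x ≤
        L (sInf {x : ℕ |
          (1 - β) * r / ((1 - β) * r + h) ≤ (μ {ω | D ω ≤ x}).toReal})) := by
  have hDm : Measurable fun ω => (D ω : ℝ) := measurable_from_top.comp hD
  have ha : 0 < (1 - β) * r := mul_pos (by linarith) hr
  set a : ℝ := (1 - β) * r with ha_def
  have hah : 0 < a + h := by linarith
  -- measurability of level sets
  have hs1 : ∀ n : ℕ, MeasurableSet {ω | n + 1 ≤ D ω} := fun n =>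
    hD (MeasurableSet.of_discrete : MeasurableSet {m : ℕ | n + 1 ≤ m})
  have hs2 : ∀ n : ℕ, MeasurableSet {ω | D ω ≤ n} := fun n =>
    hD (MeasurableSet.of_discrete : MeasurableSet {m : ℕ | m ≤ n})
  -- integrability
  have hmin : ∀ n : ℕ, Integrable (fun ω => min (n : ℝ) (D ω)) μ := by
    intro n
    refine (integrable_const (n : ℝ)).mono' ((measurable_const.min hDm).aestronglyMeasurable) ?_
    filter_upwards with ω
    have h0 : (0 : ℝ) ≤ D ω := Nat.cast_nonneg _
    have h1 : (0 : ℝ) ≤ min (n : ℝ) (D ω) := le_min (Nat.cast_nonneg _) h0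
    have h2 : min (n : ℝ) (D ω) ≤ n := min_le_left _ _
    rw [Real.norm_eq_abs, abs_le]
    constructor <;> [linarith; simpa using h2]
  have hmax : ∀ n : ℕ, Integrable (fun ω => max ((n : ℝ) - D ω) 0) μ := by
    intro n
    refine (integrable_const (n : ℝ)).mono'
      (((measurable_const.sub hDm).max measurable_const).aestronglyMeasurable) ?_
    filter_upwards with ω
    have h0 : (0 : ℝ) ≤ D ω := Nat.cast_nonneg _
    have h1 : (0 : ℝ) ≤ max ((n : ℝ) - D ω) 0 := le_max_right _ _
    have h2 : max ((n : ℝ) - D ω) 0 ≤ n := max_le (by linarith) (Nat.cast_nonneg _)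
    rw [Real.norm_eq_abs, abs_le]
    constructor <;> [linarith; simpa using h2]
  -- the first difference identity
  have key : ∀ x : ℕ, L (x + 1) - L x =
      a * (μ {ω | x + 1 ≤ D ω}).toReal - h * (μ {ω | D ω ≤ x}).toReal := by
    intro x
    have hI1 : Integrable
        (fun ω => a * min (((x + 1 : ℕ) : ℝ)) (D ω) - h * max (((x + 1 : ℕ) : ℝ) - D ω) 0) μ :=
      ((hmin (x + 1)).const_mul a).sub ((hmax (x + 1)).const_mul h)
    have hI2 : Integrable
        (fun ω => a * min ((x : ℕ) : ℝ) (D ω) - h * max (((x : ℕ) : ℝ) - D ω) 0) μ :=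
      ((hmin x).const_mul a).sub ((hmax x).const_mul h)
    rw [hL (x + 1), hL x, ← integral_sub hI1 hI2]
    have heq : (fun ω => (a * min (((x + 1 : ℕ) : ℝ)) (D ω) - h * max (((x + 1 : ℕ) : ℝ) - D ω) 0)
          - (a * min ((x : ℕ) : ℝ) (D ω) - h * max (((x : ℕ) : ℝ) - D ω) 0))
        = fun ω => Set.indicator {ω | x + 1 ≤ D ω} (fun _ => a) ω
          - Set.indicator {ω | D ω ≤ x} (fun _ => h) ω := by
      funext ω
      push_cast
      rcases le_or_gt (D ω) x with hc | hc
      · have hm1 : ω ∈ {ω | D ω ≤ x} := hc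
        have hm2 : ω ∉ {ω | x + 1 ≤ D ω} := by simp only [Set.mem_setOf_eq]; omega
        have hr1 : (D ω : ℝ) ≤ x := Nat.cast_le.mpr hc
        rw [Set.indicator_of_notMem hm2, Set.indicator_of_mem hm1,
          min_eq_right (by linarith), min_eq_right hr1,
          max_eq_left (by linarith), max_eq_left (by linarith)]
        ring
      · have hm1 : ω ∈ {ω | x + 1 ≤ D ω} := hc
        have hm2 : ω ∉ {ω | D ω ≤ x} := by simp only [Set.mem_setOf_eq]; omega
        have hr1 : (x : ℝ) + 1 ≤ D ω := by exact_mod_cast hc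
        rw [Set.indicator_of_mem hm1, Set.indicator_of_notMem hm2,
          min_eq_left hr1, min_eq_left (by linarith),
          max_eq_right (by linarith), max_eq_right (by linarith)]
        ring
    rw [heq, integral_sub ((integrable_const a).indicator (hs1 x))
        ((integrable_const h).indicator (hs2 x)),
      integral_indicator_const _ (hs1 x), integral_indicator_const _ (hs2 x),
      smul_eq_mul, smul_eq_mul]
    simp only [Measure.real]
    ring
  refine ⟨key, ?_⟩
  -- notation
  set F : ℕ → ℝ := fun n => (μ {ω | D ω ≤ n}).toReal with hF_def
  set c : ℝ := a / (a + h) with hc_def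
  set S : Set ℕ := {x : ℕ | c ≤ F x} with hS_def
  have hcompl : ∀ x : ℕ, (μ {ω | x + 1 ≤ D ω}).toReal = 1 - F x := by
    intro x
    have hset : {ω | x + 1 ≤ D ω} = {ω | D ω ≤ x}ᶜ := by
      ext ω; simp only [Set.mem_setOf_eq, Set.mem_compl_iff]; omega
    rw [hset, measure_compl (hs2 x) (measure_ne_top μ _), measure_univ,
      ENNReal.toReal_sub_of_le prob_le_one ENNReal.one_ne_top, ENNReal.toReal_one]
  have hdelta : ∀ x : ℕ, L (x + 1) - L x = a - (a + h) * F x := by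
    intro x
    rw [key x, hcompl x]
    ring
  have hac : (a + h) * c = a := by
    rw [hc_def, mul_div_cancel₀ _ (ne_of_gt hah)]
  have hFmono : ∀ x y : ℕ, x ≤ y → F x ≤ F y := by
    intro x y hxy
    refine (ENNReal.toReal_le_toReal (measure_ne_top μ _) (measure_ne_top μ _)).mpr ?_
    exact measure_mono fun ω hω => le_trans hω hxy
  -- S is nonempty
  have hc1 : c < 1 := (div_lt_one hah).mpr (by linarith)
  have hSne : S.Nonempty := by
    have hmono : Monotone fun n : ℕ => {ω | D ω ≤ n} := by
      intro x y hxy ω hω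
      exact le_trans hω hxy
    have h1 : Filter.Tendsto (fun n : ℕ => μ {ω | D ω ≤ n}) Filter.atTop
        (nhds (μ (⋃ n : ℕ, {ω | D ω ≤ n}))) := tendsto_measure_iUnion_atTop hmono
    have hU : (⋃ n : ℕ, {ω | D ω ≤ n}) = Set.univ := by
      ext ω; simp only [Set.mem_iUnion, Set.mem_setOf_eq, Set.mem_univ, iff_true]
      exact ⟨D ω, le_rfl⟩
    rw [hU, measure_univ] at h1
    have h2 : Filter.Tendsto F Filter.atTop (nhds 1) := by
      have := (ENNReal.tendsto_toReal ENNReal.one_ne_top).comp h1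
      simpa [hF_def, Function.comp_def] using this
    obtain ⟨n, hn⟩ := (h2.eventually (eventually_ge_nhds hc1)).exists
    exact ⟨n, hn⟩
  have hmem : c ≤ F (sInf S) := Nat.sInf_mem hSne
  -- monotone up to sInf S, decreasing after
  have hup : ∀ x : ℕ, x < sInf S → L x ≤ L (x + 1) := by
    intro x hx
    have hxS : x ∉ S := Nat.notMem_of_lt_sInf hx
    have hFx : F x < c := lt_of_not_ge hxS
    have h1 : (a + h) * F x ≤ (a + h) * c :=
      mul_le_mul_of_nonneg_left hFx.le hah.le
    have h2 := hdelta x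
    rw [hac] at h1
    linarith
  have hdown : ∀ x : ℕ, sInf S ≤ x → L (x + 1) ≤ L x := by
    intro x hx
    have hFx : c ≤ F x := le_trans hmem (hFmono _ _ hx)
    have h1 : (a + h) * c ≤ (a + h) * F x :=
      mul_le_mul_of_nonneg_left hFx hah.le
    have h2 := hdelta x
    rw [hac] at h1
    linarith
  intro x
  rcases le_total x (sInf S) with hx | hx
  · -- increasing part
    have claim : ∀ y : ℕ, y ≤ sInf S → ∀ z : ℕ, z ≤ y → L z ≤ L y := by
      intro y
      induction y with
      | zero => intro _ z hz; interval_cases z; exact le_rfl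
      | succ n ih =>
        intro hy z hz
        rcases Nat.eq_or_lt_of_le hz with hzz | hzz
        · rw [hzz]
        · exact le_trans (ih (by omega) z (by omega)) (hup n (by omega))
    exact claim (sInf S) le_rfl x hx
  · -- decreasing part
    induction x, hx using Nat.le_induction with
    | base => exact le_rfl
    | succ n hn ih => exact le_trans (hdown n hn) ih
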